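/- Let f : ℝ → ℝ be a differentiable function that attains both a positive and a negative value on every nonempty open interval. Then both the set N = {x ∈ ℝ : f'(x) = 0} and its complement ℝ \ N are dense in ℝ. -/
import Mathlib

theorem aux_slope (f : ℝ → ℝ) (hf : Differentiable ℝ f) {a b : ℝ} (hab : a < b)
    (hne : f a ≠ f b) : ∃ c ∈ Set.Ioo a b, deriv f c ≠ 0 := by
  obtain ⟨c, hc, hc'⟩ := exists_hasDerivAt_eq_slope f (deriv f) hab
    (hf.continuous.continuousOn) (fun x _ => (hf x).hasDerivAt)
  refine ⟨c, hc, ?_⟩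
  rw [hc']
  exact div_ne_zero (sub_ne_zero.mpr (Ne.symm hne)) (sub_ne_zero.mpr hab.ne')

/-- If `f : ℝ → ℝ` is differentiable and attains both a positive and a negative value
on every nonempty open interval, then both the zero set of `f'` and its complement
are dense in `ℝ`. -/
theorem stmt_10 (f : ℝ → ℝ) (hf : Differentiable ℝ f)
    (hnm : ∀ x y : ℝ, x < y →
      (∃ z ∈ Set.Ioo x y, 0 < f z) ∧ (∃ z ∈ Set.Ioo x y, f z < 0)) :
    Dense {x : ℝ | deriv f x = 0} ∧ Dense {x : ℝ | deriv f x = 0}ᶜ := by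
  constructor
  · rw [dense_iff_exists_between]
    intro x y hxy
    obtain ⟨⟨z, hz, hz0⟩, -⟩ := hnm x y hxy
    obtain ⟨-, u, hu, hu0⟩ := hnm x z hz.1
    obtain ⟨-, v, hv, hv0⟩ := hnm z y hz.2
    have huv : u < v := hu.2.trans hv.1
    obtain ⟨c, hc, hmax⟩ := (isCompact_Icc (a := u) (b := v)).exists_isMaxOn
      (Set.nonempty_Icc.mpr huv.le) (hf.continuous.continuousOn)
    have hcz : f z ≤ f c := hmax ⟨hu.2.le, hv.1.le⟩
    have hcu : c ≠ u := fun h => absurd (h ▸ hcz) (by linarith)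
    have hcv : c ≠ v := fun h => absurd (h ▸ hcz) (by linarith)
    have hcio : c ∈ Set.Ioo u v := ⟨lt_of_le_of_ne hc.1 (Ne.symm hcu), lt_of_le_of_ne hc.2 hcv⟩
    have : IsLocalMax f c := hmax.isLocalMax (Icc_mem_nhds hcio.1 hcio.2)
    exact ⟨c, this.deriv_eq_zero, hu.1.trans hcio.1, hcio.2.trans hv.2⟩
  · rw [dense_iff_exists_between]
    intro x y hxy
    obtain ⟨⟨a, ha, ha0⟩, b, hb, hb0⟩ := hnm x y hxy
    have hne : f a ≠ f b := by linarith
    rcases lt_trichotomy a b with h | h | h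
    · obtain ⟨c, hc, hc'⟩ := aux_slope f hf h hne
      exact ⟨c, hc', ha.1.trans hc.1, hc.2.trans hb.2⟩
    · exact absurd h (by intro h; rw [h] at hne; exact hne rfl)
    · obtain ⟨c, hc, hc'⟩ := aux_slope f hf h hne.symm
      exact ⟨c, hc', hb.1.trans hc.1, hc.2.trans ha.2⟩
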